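/- Let X be a compact metric space, f : X → X continuous, and s > 0. For any Y ⊆ X, any n ≥ 1, and any decomposition n = n₁ + ⋯ + n_k into positive integers, the minimal number of (3s, n)-dynamical balls needed to cover Y satisfies r(3s, n, Y) ≤ ∏_{i=1}^{k} r(s, n_i, f^{n₁+⋯+n_{i−1}}(Y)). -/

import Mathlib

open Set

/-- Dynamical ball `B_f(x, ε, n)`. -/
def dynBall {X : Type*} [MetricSpace X] (f : X → X) (x : X) (ε : ℝ) (n : ℕ) : Set X :=
  {y | ∀ k < n, dist (f^[k] y) (f^[k] x) < ε}

/-- `covNum f ε n Y` : minimal number of `(ε,n)`-dynamical balls needed to cover `Y`. -/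
noncomputable def covNum {X : Type*} [MetricSpace X] (f : X → X) (ε : ℝ) (n : ℕ)
    (Y : Set X) : ℕ∞ :=
  sInf {m : ℕ∞ | ∃ C : Finset X, (C.card : ℕ∞) = m ∧ Y ⊆ ⋃ x ∈ C, dynBall f x ε n}

lemma isOpen_dynBall {X : Type*} [MetricSpace X] {f : X → X} (hf : Continuous f)
    (x : X) (ε : ℝ) (n : ℕ) : IsOpen (dynBall f x ε n) := by
  have : dynBall f x ε n = ⋂ k ∈ Finset.range n, f^[k] ⁻¹' Metric.ball (f^[k] x) ε := by
    ext y
    simp [dynBall, Metric.mem_ball]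
  rw [this]
  exact isOpen_biInter_finset fun k _ =>
    (Metric.isOpen_ball).preimage (hf.iterate k)

lemma exists_dynBall_cover {X : Type*} [MetricSpace X] [CompactSpace X] {f : X → X}
    (hf : Continuous f) {ε : ℝ} (hε : 0 < ε) (n : ℕ) (Z : Set X) :
    ∃ C : Finset X, Z ⊆ ⋃ x ∈ C, dynBall f x ε n := by
  have hcov : (univ : Set X) ⊆ ⋃ x : X, dynBall f x ε n := by
    intro y _
    exact mem_iUnion.2 ⟨y, fun k _ => by simp [hε]⟩
  obtain ⟨t, ht⟩ := isCompact_univ.elim_finite_subcover (fun x : X => dynBall f x ε n)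
    (fun x => isOpen_dynBall hf x ε n) hcov
  exact ⟨t, fun y hy => ht (mem_univ y)⟩

lemma covNum_attained {X : Type*} [MetricSpace X] [CompactSpace X] {f : X → X}
    (hf : Continuous f) {ε : ℝ} (hε : 0 < ε) (n : ℕ) (Z : Set X) :
    ∃ C : Finset X, (C.card : ℕ∞) = covNum f ε n Z ∧ Z ⊆ ⋃ x ∈ C, dynBall f x ε n := by
  have hne : {m : ℕ∞ | ∃ C : Finset X, (C.card : ℕ∞) = m ∧
      Z ⊆ ⋃ x ∈ C, dynBall f x ε n}.Nonempty := by
    obtain ⟨C, hC⟩ := exists_dynBall_cover hf hε n Z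
    exact ⟨C.card, C, rfl, hC⟩
  exact csInf_mem hne

lemma exists_segment {k : ℕ} {nv : ℕ → ℕ} {t : ℕ} (ht : t < ∑ i ∈ Finset.range k, nv i) :
    ∃ i < k, (∑ j ∈ Finset.range i, nv j) ≤ t ∧
      t < (∑ j ∈ Finset.range i, nv j) + nv i := by
  induction k with
  | zero => simp at ht
  | succ k ih =>
    by_cases h : t < ∑ i ∈ Finset.range k, nv i
    · obtain ⟨i, hik, h1, h2⟩ := ih h
      exact ⟨i, Nat.lt_succ_of_lt hik, h1, h2⟩
    · refine ⟨k, Nat.lt_succ_self k, Nat.le_of_not_lt h, ?_⟩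
      rw [Finset.sum_range_succ] at ht
      exact ht

/-- Sub-multiplicativity of covering numbers along a decomposition
`n = n₁ + ⋯ + n_k` into positive integers:
`r(3s, n, Y) ≤ ∏ᵢ r(s, nᵢ, f^{n₁+⋯+n_{i−1}}(Y))`. -/
theorem covNum_submultiplicative {X : Type*} [MetricSpace X] [CompactSpace X]
    (f : X → X) (hf : Continuous f) (s : ℝ) (hs : 0 < s) (Y : Set X)
    (k : ℕ) (hk : 1 ≤ k) (nv : ℕ → ℕ) (hpos : ∀ i < k, 0 < nv i)
    (n : ℕ) (hn : n = ∑ i ∈ Finset.range k, nv i) :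
    covNum f (3*s) n Y ≤
      ∏ i ∈ Finset.range k,
        covNum f s (nv i) (f^[∑ j ∈ Finset.range i, nv j] '' Y) := by
  rcases Y.eq_empty_or_nonempty with hY | ⟨y₀, hy₀⟩
  · have : covNum f (3*s) n Y ≤ 0 := csInf_le (OrderBot.bddBelow _)
      ⟨(∅ : Finset X), by simp, by simp [hY]⟩
    exact le_trans this zero_le
  -- choose optimal covers for each segment
  set S : ℕ → ℕ := fun i => ∑ j ∈ Finset.range i, nv j with hS
  choose C hCcard hCcov using fun i : Fin k =>
    covNum_attained hf hs (nv i) (f^[S i] '' Y)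
  -- itinerary representative
  classical
  set rep : (Fin k → X) → X := fun c =>
    if h : ∃ y ∈ Y, ∀ i : Fin k, f^[S i] y ∈ dynBall f (c i) s (nv i)
    then h.choose else y₀ with hrep
  set D : Finset X := (Fintype.piFinset C).image rep with hD
  -- D covers Y by (3s, n)-balls
  have hcov : Y ⊆ ⋃ x ∈ D, dynBall f x (3*s) n := by
    intro y hy
    have hchoice : ∀ i : Fin k, ∃ x ∈ C i, f^[S i] y ∈ dynBall f x s (nv i) := by
      intro i
      have : f^[S i] y ∈ ⋃ x ∈ C i, dynBall f x s (nv i) :=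
        hCcov i ⟨y, hy, rfl⟩
      simpa using this
    choose c hc1 hc2 using hchoice
    have hcmem : c ∈ Fintype.piFinset C := by
      simp only [Fintype.mem_piFinset]; exact hc1
    have hex : ∃ y' ∈ Y, ∀ i : Fin k, f^[S i] y' ∈ dynBall f (c i) s (nv i) :=
      ⟨y, hy, hc2⟩
    set z := rep c with hz
    have hzspec : z ∈ Y ∧ ∀ i : Fin k, f^[S i] z ∈ dynBall f (c i) s (nv i) := by
      rw [hz, hrep]
      simp only [dif_pos hex]
      exact ⟨hex.choose_spec.1, hex.choose_spec.2⟩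
    have hzD : z ∈ D := Finset.mem_image.2 ⟨c, hcmem, rfl⟩
    refine mem_biUnion hzD ?_
    intro t htn
    rw [hn] at htn
    obtain ⟨i, hik, h1, h2⟩ := exists_segment htn
    have hSi : S i = ∑ j ∈ Finset.range i, nv j := rfl
    set r := t - S i with hr
    have htr : t = r + S i := by omega
    have hrlt : r < nv i := by omega
    have key : ∀ w : X, f^[S i] w ∈ dynBall f (c ⟨i, hik⟩) s (nv i) →
        dist (f^[t] w) (f^[r] (c ⟨i, hik⟩)) < s := by
      intro w hw
      have := hw r hrlt
      rw [htr, Function.iterate_add_apply]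
      exact this
    calc dist (f^[t] y) (f^[t] z)
        ≤ dist (f^[t] y) (f^[r] (c ⟨i, hik⟩)) + dist (f^[r] (c ⟨i, hik⟩)) (f^[t] z) :=
          dist_triangle _ _ _
      _ < s + s := by
          refine add_lt_add (key y (hc2 ⟨i, hik⟩)) ?_
          rw [dist_comm]
          exact key z (hzspec.2 ⟨i, hik⟩)
      _ ≤ 3*s := by linarith
  -- conclude
  have h1 : covNum f (3*s) n Y ≤ (D.card : ℕ∞) :=
    csInf_le (OrderBot.bddBelow _) ⟨D, rfl, hcov⟩
  refine h1.trans ?_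
  have h2 : (D.card : ℕ∞) ≤ ∏ i : Fin k, ((C i).card : ℕ∞) := by
    rw [← Nat.cast_prod]
    exact_mod_cast (Finset.card_image_le.trans (le_of_eq (Fintype.card_piFinset C)))
  refine h2.trans (le_of_eq ?_)
  rw [← Fin.prod_univ_eq_prod_range
    (fun i => covNum f s (nv i) (f^[∑ j ∈ Finset.range i, nv j] '' Y)) k]
  exact Finset.prod_congr rfl fun i _ => hCcard i
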